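/- Let V and W be 3-dimensional oriented real inner product spaces and let L : V → W be a linear map, with dual (pullback) map L* : W* → V*. If L* intertwines the Hodge stars, i.e., ⋆_V ∘ L* = Λ²L* ∘ ⋆_W as maps W* → Λ²V* (where ⋆_V : Λ¹V* → Λ²V* and ⋆_W : Λ¹W* → Λ²W* are the Hodge stars of the induced inner products on the dual spaces), then either L = 0 or L is an orientation-preserving linear isometry. -/
import Mathlib


open Module
open scoped RealInnerProductSpace

private lemma fin3_third : ∀ i j k m : Fin 3, i ≠ j → k ≠ i → k ≠ j → m ≠ k → m = i ∨ m = j := by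
  decide

private lemma fin3_exists_third : ∀ i j : Fin 3, i ≠ j → ∃ k : Fin 3, k ≠ i ∧ k ≠ j := by
  decide

private lemma rot3 {E : Type*} [NormedAddCommGroup E] [InnerProductSpace ℝ E]
    (g : E [⋀^Fin 3]→ₗ[ℝ] ℝ) (x y z : E) : g ![y, z, x] = g ![x, y, z] := by
  have hc : (![x, y, z] ∘ (finRotate 3)) = ![y, z, x] := by
    funext m; fin_cases m <;> rfl
  have h := g.map_perm ![x, y, z] (finRotate 3)
  rw [hc, sign_finRotate] at h
  simpa using h

private lemma expand3 {E : Type*} [NormedAddCommGroup E] [InnerProductSpace ℝ E]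
    (g : E [⋀^Fin 3]→ₗ[ℝ] ℝ) (e : OrthonormalBasis (Fin 3) ℝ E) (b : E) (i j k : Fin 3)
    (hij : i ≠ j) (hki : k ≠ i) (hkj : k ≠ j) :
    g ![b, e i, e j] = ⟪e k, b⟫ * g ![e k, e i, e j] := by
  classical
  let lm : E →ₗ[ℝ] ℝ :=
    { toFun := fun x => g ![x, e i, e j]
      map_add' := fun x y => g.map_vecCons_add ![e i, e j] x y
      map_smul' := fun c x => g.map_vecCons_smul ![e i, e j] c x }
  have hb := e.sum_repr' b
  have h1 : g ![b, e i, e j] = lm b := rfl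
  rw [h1]
  conv_lhs => rw [← hb]
  rw [map_sum, Finset.sum_eq_single k]
  · simp only [lm, map_smul, LinearMap.coe_mk, AddHom.coe_mk, smul_eq_mul]
  · intro m _ hmk
    rcases fin3_third i j k m hij hki hkj hmk with rfl | rfl
    · have : g ![e m, e m, e j] = 0 :=
        g.map_eq_zero_of_eq _ (show (![e m, e m, e j] : Fin 3 → E) 0 = ![e m, e m, e j] 1 from rfl)
          (by decide : (0 : Fin 3) ≠ 1)
      simp only [lm, map_smul, LinearMap.coe_mk, AddHom.coe_mk, smul_eq_mul, this, mul_zero]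
    · have : g ![e m, e i, e m] = 0 :=
        g.map_eq_zero_of_eq _ (show (![e m, e i, e m] : Fin 3 → E) 0 = ![e m, e i, e m] 2 from rfl)
          (by decide : (0 : Fin 3) ≠ 2)
      simp only [lm, map_smul, LinearMap.coe_mk, AddHom.coe_mk, smul_eq_mul, this, mul_zero]
  · intro h; exact absurd (Finset.mem_univ k) h

private lemma starId {E : Type*} [NormedAddCommGroup E] [InnerProductSpace ℝ E]
    [Fact (finrank ℝ E = 3)] (o : Orientation ℝ E (Fin 3))
    (star : Module.Dual ℝ E →ₗ[ℝ] (E [⋀^Fin 2]→ₗ[ℝ] ℝ))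
    (hstar : ∀ a b : E, ∀ x y z : E,
      ⟪a, x⟫ * star ((innerSL ℝ b).toLinearMap) ![y, z]
        - ⟪a, y⟫ * star ((innerSL ℝ b).toLinearMap) ![x, z]
        + ⟪a, z⟫ * star ((innerSL ℝ b).toLinearMap) ![x, y]
      = ⟪a, b⟫ * o.volumeForm ![x, y, z])
    (b : E) :
    star ((innerSL ℝ b).toLinearMap) = o.volumeForm.curryLeft b := by
  classical
  let e : OrthonormalBasis (Fin 3) ℝ E := o.finOrthonormalBasis (by norm_num) Fact.out
  have hON := orthonormal_iff_ite.mp e.orthonormal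
  apply e.toBasis.ext_alternating
  intro v hv
  have hv2 : (fun m => e.toBasis (v m)) = ![e (v 0), e (v 1)] := by
    funext m; fin_cases m <;> simp [OrthonormalBasis.coe_toBasis]
  rw [hv2]
  set i := v 0 with hi
  set j := v 1 with hj
  have hij : i ≠ j := fun h => absurd (hv h) (by decide)
  obtain ⟨k, hki, hkj⟩ := fin3_exists_third i j hij
  have h1 := hstar (e k) b (e k) (e i) (e j)
  rw [hON k k, hON k i, hON k j, if_pos rfl, if_neg hki, if_neg hkj] at h1
  have h2 : star ((innerSL ℝ b).toLinearMap) ![e i, e j] = ⟪e k, b⟫ * o.volumeForm ![e k, e i, e j] := by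
    linarith [h1]
  rw [h2]
  have h3 : o.volumeForm.curryLeft b ![e i, e j] = o.volumeForm ![b, e i, e j] := rfl
  rw [h3, expand3 o.volumeForm e b i j k hij hki hkj]

/-- Pointwise form of Manton's theorem: let `V`, `W` be 3-dimensional oriented real inner
product spaces, with Hodge stars `⋆_V : Λ¹V* → Λ²V*` and `⋆_W : Λ¹W* → Λ²W*` on the dual
spaces, characterized by `α ∧ ⋆β = ⟨α,β⟩ vol` (covectors being represented as `⟨a,·⟩`,
the wedge written out pointwise, and `vol` the metric volume form of the orientation).
If the pullback `L* : W* → V*` of a linear map `L : V → W` intertwines the Hodge stars,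
`⋆_V ∘ L* = Λ²L* ∘ ⋆_W`, then `L = 0` or `L` is an orientation-preserving linear
isometry. -/
theorem hodge_intertwiner_is_zero_or_isometry {V W : Type*}
    [NormedAddCommGroup V] [InnerProductSpace ℝ V] [Fact (finrank ℝ V = 3)]
    [NormedAddCommGroup W] [InnerProductSpace ℝ W] [Fact (finrank ℝ W = 3)]
    (oV : Orientation ℝ V (Fin 3)) (oW : Orientation ℝ W (Fin 3))
    (starV : Module.Dual ℝ V →ₗ[ℝ] (V [⋀^Fin 2]→ₗ[ℝ] ℝ))
    (hstarV : ∀ a b : V, ∀ x y z : V,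
      ⟪a, x⟫ * starV ((innerSL ℝ b).toLinearMap) ![y, z]
        - ⟪a, y⟫ * starV ((innerSL ℝ b).toLinearMap) ![x, z]
        + ⟪a, z⟫ * starV ((innerSL ℝ b).toLinearMap) ![x, y]
      = ⟪a, b⟫ * oV.volumeForm ![x, y, z])
    (starW : Module.Dual ℝ W →ₗ[ℝ] (W [⋀^Fin 2]→ₗ[ℝ] ℝ))
    (hstarW : ∀ a b : W, ∀ x y z : W,
      ⟪a, x⟫ * starW ((innerSL ℝ b).toLinearMap) ![y, z]
        - ⟪a, y⟫ * starW ((innerSL ℝ b).toLinearMap) ![x, z]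
        + ⟪a, z⟫ * starW ((innerSL ℝ b).toLinearMap) ![x, y]
      = ⟪a, b⟫ * oW.volumeForm ![x, y, z])
    (L : V →ₗ[ℝ] W)
    (hL : ∀ β : Module.Dual ℝ W, starV (L.dualMap β) = (starW β).compLinearMap L) :
    L = 0 ∨ ((∀ v : V, ‖L v‖ = ‖v‖) ∧ oW.volumeForm.compLinearMap L = oV.volumeForm) := by
  classical
  haveI : FiniteDimensional ℝ V := FiniteDimensional.of_fact_finrank_eq_succ 2
  haveI : FiniteDimensional ℝ W := FiniteDimensional.of_fact_finrank_eq_succ 2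
  have hAV := starId oV starV hstarV
  have hAW := starId oW starW hstarW
  -- the key pointwise identity
  have key : ∀ (b : W) (y z : V),
      oV.volumeForm ![L.adjoint b, y, z] = oW.volumeForm ![b, L y, L z] := by
    intro b y z
    have h2 : L.dualMap ((innerSL ℝ b).toLinearMap) = (innerSL ℝ (L.adjoint b)).toLinearMap := by
      ext v
      simp only [LinearMap.dualMap_apply, ContinuousLinearMap.coe_coe, innerSL_apply_apply]
      exact (LinearMap.adjoint_inner_left L v b).symm
    have h1 := hL ((innerSL ℝ b).toLinearMap)
    rw [h2, hAV, hAW] at h1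
    have h3 := DFunLike.congr_fun h1 ![y, z]
    have h4 : (fun i => L (![y, z] i)) = ![L y, L z] := by funext m; fin_cases m <;> rfl
    simpa [AlternatingMap.compLinearMap_apply, h4] using h3
  -- positively oriented orthonormal basis of V
  set e : OrthonormalBasis (Fin 3) ℝ V := oV.finOrthonormalBasis (by norm_num) Fact.out with he
  have heo : e.toBasis.orientation = oV := oV.finOrthonormalBasis_orientation (by norm_num) Fact.out
  have hecoe : (![e 0, e 1, e 2] : Fin 3 → V) = ⇑e := by
    funext m; fin_cases m <;> rfl
  have heV1 : oV.volumeForm ![e 0, e 1, e 2] = 1 := by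
    rw [oV.volumeForm_robust e heo, hecoe, ← OrthonormalBasis.coe_toBasis]
    exact e.toBasis.det_self
  set F : Fin 3 → W := fun i => L (e i) with hF
  set D : ℝ := oW.volumeForm ![F 0, F 1, F 2] with hD
  -- the three cyclic instances
  have A0 : ∀ b : W, ⟪F 0, b⟫ = oW.volumeForm ![b, F 1, F 2] := by
    intro b
    have h := key b (e 1) (e 2)
    rw [expand3 oV.volumeForm e (L.adjoint b) 1 2 0 (by decide) (by decide) (by decide),
      heV1, mul_one, LinearMap.adjoint_inner_right] at h
    exact h
  have A1 : ∀ b : W, ⟪F 1, b⟫ = oW.volumeForm ![b, F 2, F 0] := by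
    intro b
    have h := key b (e 2) (e 0)
    rw [expand3 oV.volumeForm e (L.adjoint b) 2 0 1 (by decide) (by decide) (by decide),
      rot3 oV.volumeForm (e 0) (e 1) (e 2), heV1, mul_one,
      LinearMap.adjoint_inner_right] at h
    exact h
  have A2 : ∀ b : W, ⟪F 2, b⟫ = oW.volumeForm ![b, F 0, F 1] := by
    intro b
    have h := key b (e 0) (e 1)
    rw [expand3 oV.volumeForm e (L.adjoint b) 0 1 2 (by decide) (by decide) (by decide),
      ← rot3 oV.volumeForm (e 2) (e 0) (e 1),
      heV1, mul_one, LinearMap.adjoint_inner_right] at h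
    exact h
  -- Gram matrix computations
  have h01 : ⟪F 0, F 1⟫ = 0 := by
    rw [A0 (F 1)]
    exact oW.volumeForm.map_eq_zero_of_eq _
      (show (![F 1, F 1, F 2] : Fin 3 → W) 0 = ![F 1, F 1, F 2] 1 from rfl) (by decide)
  have h02 : ⟪F 0, F 2⟫ = 0 := by
    rw [A0 (F 2)]
    exact oW.volumeForm.map_eq_zero_of_eq _
      (show (![F 2, F 1, F 2] : Fin 3 → W) 0 = ![F 2, F 1, F 2] 2 from rfl) (by decide)
  have h12 : ⟪F 1, F 2⟫ = 0 := by
    rw [A1 (F 2)]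
    exact oW.volumeForm.map_eq_zero_of_eq _
      (show (![F 2, F 2, F 0] : Fin 3 → W) 0 = ![F 2, F 2, F 0] 1 from rfl) (by decide)
  have h00 : ⟪F 0, F 0⟫ = D := A0 (F 0)
  have h11 : ⟪F 1, F 1⟫ = D := by
    rw [A1 (F 1), rot3 oW.volumeForm (F 0) (F 1) (F 2)]
  have h22 : ⟪F 2, F 2⟫ = D := by
    rw [A2 (F 2), ← rot3 oW.volumeForm (F 2) (F 0) (F 1)]
  -- |D| = product of norms
  have h10 : ⟪F 1, F 0⟫ = 0 := by rw [real_inner_comm]; exact h01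
  have h20 : ⟪F 2, F 0⟫ = 0 := by rw [real_inner_comm]; exact h02
  have h21 : ⟪F 2, F 1⟫ = 0 := by rw [real_inner_comm]; exact h12
  have hpair : Pairwise fun i j => ⟪(![F 0, F 1, F 2] : Fin 3 → W) i, ![F 0, F 1, F 2] j⟫ = 0 := by
    intro i j hij
    fin_cases i <;> fin_cases j <;>
      first
        | exact absurd rfl hij
        | exact h01 | exact h02 | exact h12 | exact h10 | exact h20 | exact h21
  have habs : |D| = ‖F 0‖ * ‖F 1‖ * ‖F 2‖ := by
    rw [hD, oW.abs_volumeForm_apply_of_pairwise_orthogonal hpair]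
    simp [Fin.prod_univ_three, mul_assoc]
  have hn0 : ‖F 0‖ ^ 2 = D := by rw [← real_inner_self_eq_norm_sq]; exact h00
  have hn1 : ‖F 1‖ ^ 2 = D := by rw [← real_inner_self_eq_norm_sq]; exact h11
  have hn2 : ‖F 2‖ ^ 2 = D := by rw [← real_inner_self_eq_norm_sq]; exact h22
  have hDnn : 0 ≤ D := by rw [← hn0]; positivity
  have hDcases : D = 0 ∨ D = 1 := by
    rcases eq_or_ne D 0 with h | h
    · exact Or.inl h
    · right
      have habs' : D = ‖F 0‖ * ‖F 1‖ * ‖F 2‖ := by rwa [abs_of_nonneg hDnn] at habs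
      have hcube : D ^ 3 = D ^ 2 := by
        calc D ^ 3 = ‖F 0‖ ^ 2 * ‖F 1‖ ^ 2 * ‖F 2‖ ^ 2 := by rw [hn0, hn1, hn2]; ring
          _ = (‖F 0‖ * ‖F 1‖ * ‖F 2‖) ^ 2 := by ring
          _ = D ^ 2 := by rw [← habs']
      have h3 : D ^ 2 * D = D ^ 2 * 1 := by linear_combination hcube
      exact mul_left_cancel₀ (pow_ne_zero 2 h) h3
  rcases hDcases with hD0 | hD1
  · -- L = 0
    left
    apply e.toBasis.ext
    intro i
    have hz : ∀ m : Fin 3, L (e m) = 0 := by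
      intro m
      have : ‖F m‖ ^ 2 = 0 := by
        fin_cases m <;> simp [hn0, hn1, hn2, hD0]
      have h2 : ‖F m‖ = 0 := (pow_eq_zero_iff two_ne_zero).mp this
      exact norm_eq_zero.mp h2
    simpa [OrthonormalBasis.coe_toBasis] using hz i
  · -- isometry case
    right
    have hFon : Orthonormal ℝ F := by
      rw [orthonormal_iff_ite]
      intro i j
      fin_cases i <;> fin_cases j <;>
        first
          | (rw [if_pos rfl]
             first | exact h00.trans hD1 | exact h11.trans hD1 | exact h22.trans hD1)
          | (rw [if_neg (by decide)]
             first | exact h01 | exact h02 | exact h12 | exact h10 | exact h20 | exact h21)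
    have hinner : ∀ x y : V, ⟪L x, L y⟫ = ⟪x, y⟫ := by
      intro x y
      have hx := e.sum_repr' x
      have hy := e.sum_repr' y
      have hLx : L x = ∑ i, ⟪e i, x⟫ • F i := by
        conv_lhs => rw [← hx]
        rw [map_sum]
        exact Finset.sum_congr rfl fun i _ => map_smul L _ _
      have hLy : L y = ∑ i, ⟪e i, y⟫ • F i := by
        conv_lhs => rw [← hy]
        rw [map_sum]
        exact Finset.sum_congr rfl fun i _ => map_smul L _ _
      rw [hLx, hLy, hFon.inner_sum]
      conv_rhs => rw [← hx, ← hy]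
      rw [e.orthonormal.inner_sum]
    constructor
    · intro v
      have h2 : ‖L v‖ ^ 2 = ‖v‖ ^ 2 := by
        rw [← real_inner_self_eq_norm_sq, ← real_inner_self_eq_norm_sq]
        exact hinner v v
      exact (sq_eq_sq₀ (norm_nonneg _) (norm_nonneg _)).mp h2
    · apply e.toBasis.ext_alternating
      intro v hv
      have hσb : Function.Bijective v := Finite.injective_iff_bijective.mp hv
      set σ : Equiv.Perm (Fin 3) := Equiv.ofBijective v hσb with hσ
      have h1 : (fun m => e.toBasis (v m)) = ⇑e ∘ σ := by
        funext m; simp [hσ, OrthonormalBasis.coe_toBasis, Equiv.ofBijective_apply]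
      have h2 : (fun m => L (e.toBasis (v m))) = F ∘ σ := by
        funext m; simp [hσ, hF, OrthonormalBasis.coe_toBasis, Equiv.ofBijective_apply]
      have hvolF : oW.volumeForm F = 1 := by
        rw [← hD1, hD]; congr 1; funext m; fin_cases m <;> rfl
      have hvole : oV.volumeForm ⇑e = 1 := by rw [← hecoe]; exact heV1
      calc (oW.volumeForm.compLinearMap L) (fun m => e.toBasis (v m))
          = oW.volumeForm (F ∘ σ) := by
            rw [AlternatingMap.compLinearMap_apply]
            exact congrArg _ h2
        _ = Equiv.Perm.sign σ • oW.volumeForm F := oW.volumeForm.map_perm F σ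
        _ = Equiv.Perm.sign σ • oV.volumeForm ⇑e := by rw [hvolF, hvole]
        _ = oV.volumeForm (⇑e ∘ σ) := (oV.volumeForm.map_perm ⇑e σ).symm
        _ = oV.volumeForm (fun m => e.toBasis (v m)) := by rw [h1]
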